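/- Let H be a countable group and let d̂ : H × H → [0,∞] be an extended metric (symmetric, vanishing exactly on the diagonal, satisfying the triangle inequality, possibly taking the value ∞) which is left-invariant (d̂(gh, gk) = d̂(h, k) for all g, h, k ∈ H) and proper (for every real r ≥ 0 and every h ∈ H, the ball {k ∈ H | d̂(h, k) ≤ r} is finite). Then there exists a left-invariant metric d̃ : H × H → ℝ such that (a) d̃(h, k) ≤ d̂(h, k) for all h, k ∈ H, and (b) d̃ is proper, i.e., every ball of finite radius with respect to d̃ has finitely many elements. -/

import Mathlib

open scoped ENNReal

section Aux

variable {H : Type*} [Group H]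

/-- weight function -/
noncomputable def mrmW (dhat : H → H → ℝ≥0∞) (enc : H → ℕ) (s : H) : ℝ :=
  (min (dhat 1 s) (ENNReal.ofReal (1 + min (enc s : ℝ) (enc s⁻¹ : ℝ)))).toReal

lemma mrmW_nonneg (dhat : H → H → ℝ≥0∞) (enc : H → ℕ) (s : H) :
    0 ≤ mrmW dhat enc s := ENNReal.toReal_nonneg

lemma mrmW_ne_top (dhat : H → H → ℝ≥0∞) (enc : H → ℕ) (s : H) :
    min (dhat 1 s) (ENNReal.ofReal (1 + min (enc s : ℝ) (enc s⁻¹ : ℝ))) ≠ ⊤ :=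
  ne_top_of_le_ne_top ENNReal.ofReal_ne_top (min_le_right _ _)

lemma mrmW_one (dhat : H → H → ℝ≥0∞) (enc : H → ℕ)
    (hzero : ∀ h k : H, dhat h k = 0 ↔ h = k) :
    mrmW dhat enc (1 : H) = 0 := by
  have : dhat (1 : H) 1 = 0 := (hzero 1 1).mpr rfl
  simp [mrmW, this]

lemma dhat_one_inv (dhat : H → H → ℝ≥0∞)
    (hsymm : ∀ h k : H, dhat h k = dhat k h)
    (hinv : ∀ g h k : H, dhat (g * h) (g * k) = dhat h k) (s : H) :
    dhat 1 s⁻¹ = dhat 1 s := by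
  have := hinv s 1 s⁻¹
  simp at this
  rw [← this, hsymm]

lemma mrmW_inv (dhat : H → H → ℝ≥0∞) (enc : H → ℕ)
    (hsymm : ∀ h k : H, dhat h k = dhat k h)
    (hinv : ∀ g h k : H, dhat (g * h) (g * k) = dhat h k) (s : H) :
    mrmW dhat enc s⁻¹ = mrmW dhat enc s := by
  unfold mrmW
  rw [dhat_one_inv dhat hsymm hinv, inv_inv, min_comm (enc s⁻¹ : ℝ)]

/-- chain sums -/
def mrmS (dhat : H → H → ℝ≥0∞) (enc : H → ℕ) (h k : H) : Set ℝ :=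
  {a | ∃ L : List H, L.prod = h⁻¹ * k ∧ (L.map (mrmW dhat enc)).sum = a}

lemma mrmS_nonempty (dhat : H → H → ℝ≥0∞) (enc : H → ℕ) (h k : H) :
    (mrmS dhat enc h k).Nonempty :=
  ⟨mrmW dhat enc (h⁻¹ * k), ⟨[h⁻¹ * k], by simp⟩⟩

lemma mrmS_bddBelow (dhat : H → H → ℝ≥0∞) (enc : H → ℕ) (h k : H) :
    BddBelow (mrmS dhat enc h k) := by
  refine ⟨0, fun a ha => ?_⟩
  obtain ⟨L, -, hsum⟩ := ha
  rw [← hsum]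
  exact List.sum_nonneg (by
    intro x hx
    obtain ⟨s, -, rfl⟩ := List.mem_map.1 hx
    exact mrmW_nonneg dhat enc s)

noncomputable def mrmD (dhat : H → H → ℝ≥0∞) (enc : H → ℕ) (h k : H) : ℝ :=
  sInf (mrmS dhat enc h k)

lemma mrmD_nonneg (dhat : H → H → ℝ≥0∞) (enc : H → ℕ) (h k : H) :
    0 ≤ mrmD dhat enc h k :=
  le_csInf (mrmS_nonempty dhat enc h k) (fun a ha => by
    obtain ⟨L, -, hsum⟩ := ha
    rw [← hsum]
    exact List.sum_nonneg (by
      intro x hx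
      obtain ⟨s, -, rfl⟩ := List.mem_map.1 hx
      exact mrmW_nonneg dhat enc s))

lemma mrmD_le (dhat : H → H → ℝ≥0∞) (enc : H → ℕ) {h k : H} {L : List H}
    (hL : L.prod = h⁻¹ * k) : mrmD dhat enc h k ≤ (L.map (mrmW dhat enc)).sum :=
  csInf_le (mrmS_bddBelow dhat enc h k) ⟨L, hL, rfl⟩

end Aux

section Aux2
variable {H : Type*} [Group H]

lemma mrmS_symm (dhat : H → H → ℝ≥0∞) (enc : H → ℕ)
    (hsymm : ∀ h k : H, dhat h k = dhat k h)
    (hinv : ∀ g h k : H, dhat (g * h) (g * k) = dhat h k) (h k : H) :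
    mrmS dhat enc h k = mrmS dhat enc k h := by
  have key : ∀ h k : H, mrmS dhat enc h k ⊆ mrmS dhat enc k h := by
    intro h k a ha
    obtain ⟨L, hprod, hsum⟩ := ha
    refine ⟨(L.map (fun x => x⁻¹)).reverse, ?_, ?_⟩
    · rw [← List.prod_inv_reverse, hprod]
      simp
    · rw [← hsum, List.map_reverse, List.sum_reverse, List.map_map]
      congr 1
      exact List.map_congr_left (fun s _ => mrmW_inv dhat enc hsymm hinv s)
  exact le_antisymm (key h k) (key k h)

lemma mrmD_symm (dhat : H → H → ℝ≥0∞) (enc : H → ℕ)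
    (hsymm : ∀ h k : H, dhat h k = dhat k h)
    (hinv : ∀ g h k : H, dhat (g * h) (g * k) = dhat h k) (h k : H) :
    mrmD dhat enc h k = mrmD dhat enc k h := by
  unfold mrmD; rw [mrmS_symm dhat enc hsymm hinv]

lemma mrmD_triangle (dhat : H → H → ℝ≥0∞) (enc : H → ℕ) (h k l : H) :
    mrmD dhat enc h l ≤ mrmD dhat enc h k + mrmD dhat enc k l := by
  rw [← sub_le_iff_le_add']
  refine le_csInf (mrmS_nonempty dhat enc k l) (fun b hb => ?_)
  rw [sub_le_iff_le_add, add_comm, ← sub_le_iff_le_add]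
  refine le_csInf (mrmS_nonempty dhat enc h k) (fun a ha => ?_)
  rw [sub_le_iff_le_add, add_comm]
  obtain ⟨L1, hp1, hs1⟩ := ha
  obtain ⟨L2, hp2, hs2⟩ := hb
  have : (L1 ++ L2).prod = h⁻¹ * l := by
    rw [List.prod_append, hp1, hp2]; group
  calc mrmD dhat enc h l ≤ ((L1 ++ L2).map (mrmW dhat enc)).sum := mrmD_le dhat enc this
    _ = a + b := by rw [List.map_append, List.sum_append, hs1, hs2]
    _ ≤ b + a := le_of_eq (add_comm a b)

lemma mrmD_invariant (dhat : H → H → ℝ≥0∞) (enc : H → ℕ) (g h k : H) :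
    mrmD dhat enc (g * h) (g * k) = mrmD dhat enc h k := by
  unfold mrmD mrmS
  have : (g * h)⁻¹ * (g * k) = h⁻¹ * k := by group
  rw [this]

lemma mrmD_le_dhat (dhat : H → H → ℝ≥0∞) (enc : H → ℕ)
    (hinv : ∀ g h k : H, dhat (g * h) (g * k) = dhat h k) (h k : H) :
    ENNReal.ofReal (mrmD dhat enc h k) ≤ dhat h k := by
  have h1 : dhat h k = dhat 1 (h⁻¹ * k) := by
    have := hinv h⁻¹ h k; simp at this; rw [this]
  have h2 : mrmD dhat enc h k ≤ mrmW dhat enc (h⁻¹ * k) := by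
    have := mrmD_le dhat enc (h := h) (k := k) (L := [h⁻¹ * k]) (by simp)
    simpa using this
  calc ENNReal.ofReal (mrmD dhat enc h k) ≤ ENNReal.ofReal (mrmW dhat enc (h⁻¹ * k)) :=
        ENNReal.ofReal_le_ofReal h2
    _ = min (dhat 1 (h⁻¹ * k)) (ENNReal.ofReal (1 + min (enc (h⁻¹*k) : ℝ) (enc (h⁻¹*k)⁻¹ : ℝ))) :=
        ENNReal.ofReal_toReal (mrmW_ne_top dhat enc _)
    _ ≤ dhat 1 (h⁻¹ * k) := min_le_left _ _
    _ = dhat h k := h1.symm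

end Aux2

section Aux3
variable {H : Type*} [Group H]

/-- lower bound on chain sums whose product is nontrivial -/
lemma chain_sum_ge (dhat : H → H → ℝ≥0∞) (enc : H → ℕ) {ε : ℝ}
    (hε : ∀ s : H, s ≠ 1 → ε ≤ mrmW dhat enc s) :
    ∀ L : List H, L.prod ≠ 1 → ε ≤ (L.map (mrmW dhat enc)).sum := by
  intro L
  induction L with
  | nil => intro hL; simp at hL
  | cons s L ih =>
    intro hL
    rw [List.map_cons, List.sum_cons]
    by_cases hs : s = 1
    · subst hs
      rw [List.prod_cons, one_mul] at hL
      have := ih hL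
      nlinarith [mrmW_nonneg dhat enc (1 : H)]
    · have h1 := hε s hs
      have h2 : 0 ≤ (L.map (mrmW dhat enc)).sum :=
        List.sum_nonneg (by
          intro x hx
          obtain ⟨t, -, rfl⟩ := List.mem_map.1 hx
          exact mrmW_nonneg dhat enc t)
      linarith

lemma sum_ge_mul_length {w : H → ℝ} {ε : ℝ} :
    ∀ L : List H, (∀ s ∈ L, ε ≤ w s) → ε * L.length ≤ (L.map w).sum := by
  intro L
  induction L with
  | nil => simp
  | cons s L ih =>
    intro hL
    have h1 := hL s List.mem_cons_self
    have h2 := ih (fun t ht => hL t (List.mem_cons_of_mem s ht))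
    simp only [List.map_cons, List.sum_cons, List.length_cons]
    push_cast
    nlinarith

open Classical in
lemma filter_ne_one_prod : ∀ L : List H,
    (L.filter (fun s => decide (s ≠ 1))).prod = L.prod := by
  intro L
  induction L with
  | nil => simp
  | cons s L ih =>
    by_cases hs : s = 1
    · subst hs
      rw [List.filter_cons, if_neg (by simp), ih, List.prod_cons, one_mul]
    · rw [List.filter_cons, if_pos (by simpa using hs), List.prod_cons, List.prod_cons, ih]

lemma finite_prods {W : Set H} (hW : W.Finite) (n : ℕ) :
    {x : H | ∃ L : List H, L.length ≤ n ∧ (∀ s ∈ L, s ∈ W) ∧ L.prod = x}.Finite := by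
  induction n with
  | zero =>
    refine Set.Finite.subset (Set.finite_singleton 1) ?_
    rintro x ⟨L, hlen, -, hprod⟩
    rw [Nat.le_zero, List.length_eq_zero_iff] at hlen
    subst hlen
    simp at hprod
    simp [hprod.symm]
  | succ n ih =>
    refine Set.Finite.subset (ih.union (Set.Finite.image2 (· * ·) hW ih)) ?_
    rintro x ⟨L, hlen, hmem, hprod⟩
    match L with
    | [] => exact Or.inl ⟨[], by simp, by simp, by simpa using hprod⟩
    | s :: L' =>
      refine Or.inr ⟨s, hmem s List.mem_cons_self, L'.prod, ⟨L', ?_, ?_, rfl⟩, ?_⟩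
      · exact Nat.lt_succ_iff.mp (by simpa using Nat.lt_succ_iff.mpr hlen)
      · exact fun t ht => hmem t (List.mem_cons_of_mem s ht)
      · rw [← hprod, List.prod_cons]

end Aux3

/-- A proper left-invariant extended metric on a countable group
can be replaced by a proper left-invariant real-valued metric bounded above by it. -/
theorem modified_relative_metric
    {H : Type*} [Group H] [Countable H]
    (dhat : H → H → ℝ≥0∞)
    (hzero : ∀ h k : H, dhat h k = 0 ↔ h = k)
    (hsymm : ∀ h k : H, dhat h k = dhat k h)
    (htri : ∀ h k l : H, dhat h l ≤ dhat h k + dhat k l)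
    (hinv : ∀ g h k : H, dhat (g * h) (g * k) = dhat h k)
    (hproper : ∀ r : ℝ, 0 ≤ r → ∀ h : H,
      {k : H | dhat h k ≤ ENNReal.ofReal r}.Finite) :
    ∃ dtil : H → H → ℝ,
      (∀ h k : H, 0 ≤ dtil h k) ∧
      (∀ h k : H, dtil h k = 0 ↔ h = k) ∧
      (∀ h k : H, dtil h k = dtil k h) ∧
      (∀ h k l : H, dtil h l ≤ dtil h k + dtil k l) ∧
      (∀ g h k : H, dtil (g * h) (g * k) = dtil h k) ∧
      (∀ h k : H, ENNReal.ofReal (dtil h k) ≤ dhat h k) ∧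
      (∀ h : H, ∀ r : ℝ, {k : H | dtil h k ≤ r}.Finite) := by
  classical
  obtain ⟨enc, henc⟩ := Countable.exists_injective_nat H
  set w := mrmW dhat enc with hw
  -- the finite "unit ball" for dhat at 1
  set F : Finset H := ((hproper 1 zero_le_one 1).toFinset).erase 1 with hF
  set T : Finset ℝ := insert (1 : ℝ) (F.image w) with hT
  have hTne : T.Nonempty := ⟨1, Finset.mem_insert_self _ _⟩
  set ε : ℝ := T.min' hTne with hε
  -- w is positive on nontrivial elements
  have hwpos : ∀ s : H, s ≠ 1 → 0 < w s := by
    intro s hs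
    rw [hw]
    unfold mrmW
    apply ENNReal.toReal_pos
    · rw [← pos_iff_ne_zero, lt_min_iff]
      constructor
      · rw [pos_iff_ne_zero, Ne, hzero]
        exact fun h => hs h.symm
      · rw [pos_iff_ne_zero, Ne, ENNReal.ofReal_eq_zero, not_le]
        have : (0:ℝ) ≤ min (enc s : ℝ) (enc s⁻¹ : ℝ) := le_min (by positivity) (by positivity)
        linarith
    · exact mrmW_ne_top dhat enc s
  have hεpos : 0 < ε := by
    obtain ⟨x, hxT, hxmin⟩ : ∃ x ∈ T, T.min' hTne = x := ⟨T.min' hTne, T.min'_mem hTne, rfl⟩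
    rw [hε, hxmin]
    rcases Finset.mem_insert.1 hxT with h1 | h2
    · rw [h1]; norm_num
    · obtain ⟨s, hsF, rfl⟩ := Finset.mem_image.1 h2
      exact hwpos s (Finset.ne_of_mem_erase hsF)
  have hεone : ε ≤ 1 := Finset.min'_le T 1 (Finset.mem_insert_self _ _)
  have hεle : ∀ s : H, s ≠ 1 → ε ≤ w s := by
    intro s hs
    by_cases hds : dhat 1 s ≤ ENNReal.ofReal 1
    · apply Finset.min'_le
      rw [hT]
      apply Finset.mem_insert_of_mem
      apply Finset.mem_image_of_mem
      rw [hF, Finset.mem_erase, Set.Finite.mem_toFinset]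
      exact ⟨hs, hds⟩
    · push_neg at hds
      refine le_trans hεone ?_
      rw [hw]
      unfold mrmW
      have hmin : ENNReal.ofReal 1 ≤
          min (dhat 1 s) (ENNReal.ofReal (1 + min (enc s : ℝ) (enc s⁻¹ : ℝ))) := by
        rw [le_min_iff]
        refine ⟨hds.le, ENNReal.ofReal_le_ofReal ?_⟩
        have : (0:ℝ) ≤ min (enc s : ℝ) (enc s⁻¹ : ℝ) := le_min (by positivity) (by positivity)
        linarith
      have := ENNReal.toReal_mono (mrmW_ne_top dhat enc s) hmin
      simpa using this
  refine ⟨mrmD dhat enc, mrmD_nonneg dhat enc, ?_, mrmD_symm dhat enc hsymm hinv,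
    mrmD_triangle dhat enc, mrmD_invariant dhat enc, mrmD_le_dhat dhat enc hinv, ?_⟩
  · -- zero iff equal
    intro h k
    constructor
    · intro h0
      by_contra hne
      have hne' : h⁻¹ * k ≠ 1 := fun hc => hne (inv_mul_eq_one.mp hc)
      have : ε ≤ mrmD dhat enc h k :=
        le_csInf (mrmS_nonempty dhat enc h k) (by
          rintro a ⟨L, hprod, rfl⟩
          exact chain_sum_ge dhat enc hεle L (hprod ▸ hne'))
      linarith
    · intro h0
      subst h0
      apply le_antisymm _ (mrmD_nonneg dhat enc h h)
      have := mrmD_le dhat enc (h := h) (k := h) (L := []) (by simp)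
      simpa using this
  · -- properness
    intro h r
    -- reduce to balls at 1
    have hred : {k : H | mrmD dhat enc h k ≤ r} =
        (fun k => h⁻¹ * k) ⁻¹' {x : H | mrmD dhat enc 1 x ≤ r} := by
      ext k
      simp only [Set.mem_setOf_eq, Set.mem_preimage]
      rw [show mrmD dhat enc 1 (h⁻¹ * k) = mrmD dhat enc h k by
        have := mrmD_invariant dhat enc h⁻¹ h k
        simpa using this]
    rw [hred]
    set ρ : ℝ := max r 0 + 1 with hρ
    have hρpos : 0 < ρ := by positivity
    have hrρ : r < ρ := by
      rw [hρ]
      have := le_max_left r 0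
      linarith
    -- the finite set of small-weight elements
    have hWfin : {s : H | w s ≤ ρ}.Finite := by
      have hsub : {s : H | w s ≤ ρ} ⊆
          {s : H | dhat 1 s ≤ ENNReal.ofReal ρ} ∪
          ((fun s : H => enc s) ⁻¹' {n : ℕ | (n : ℝ) ≤ ρ} ∪
           (fun s : H => enc s⁻¹) ⁻¹' {n : ℕ | (n : ℝ) ≤ ρ}) := by
        intro s hs
        simp only [Set.mem_setOf_eq] at hs
        rw [hw] at hs
        unfold mrmW at hs
        rw [← ENNReal.le_ofReal_iff_toReal_le (mrmW_ne_top dhat enc s) hρpos.le,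
          min_le_iff] at hs
        rcases hs with hs | hs
        · exact Or.inl hs
        · right
          rw [ENNReal.ofReal_le_ofReal_iff hρpos.le] at hs
          rcases le_total (enc s : ℝ) (enc s⁻¹ : ℝ) with hc | hc
          · left
            simp only [Set.mem_preimage, Set.mem_setOf_eq]
            rw [min_eq_left hc] at hs
            linarith
          · right
            simp only [Set.mem_preimage, Set.mem_setOf_eq]
            rw [min_eq_right hc] at hs
            linarith
      have hnat : {n : ℕ | (n : ℝ) ≤ ρ}.Finite := by
        apply Set.Finite.subset (Set.finite_Iic ⌈ρ⌉₊)
        intro n hn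
        simp only [Set.mem_setOf_eq] at hn
        simp only [Set.mem_Iic]
        exact_mod_cast hn.trans (Nat.le_ceil ρ)
      refine Set.Finite.subset (Set.Finite.union (hproper ρ hρpos.le 1)
        (Set.Finite.union ?_ ?_)) hsub
      · exact hnat.preimage (henc.injOn)
      · exact hnat.preimage ((henc.comp (inv_injective)).injOn)
    -- bound ball by products of bounded-length chains
    set N : ℕ := ⌈ρ / ε⌉₊ with hN
    refine Set.Finite.preimage (Set.injOn_of_injective (fun a b hab => by
      simpa using mul_left_cancel hab)) ?_
    refine Set.Finite.subset (finite_prods hWfin N) ?_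
    intro x hx
    simp only [Set.mem_setOf_eq] at hx
    have hlt : mrmD dhat enc 1 x < ρ := lt_of_le_of_lt hx hrρ
    obtain ⟨a, ⟨L, hprod, rfl⟩, ha⟩ :=
      exists_lt_of_csInf_lt (mrmS_nonempty dhat enc 1 x) hlt
    rw [inv_one, one_mul] at hprod
    set L' : List H := L.filter (fun s => decide (s ≠ 1)) with hL'
    have hprod' : L'.prod = x := by rw [hL', filter_ne_one_prod, hprod]
    have hsub' : List.Sublist (L'.map w) (L.map w) := (show L'.Sublist L from List.filter_sublist).map w
    have hsum' : (L'.map w).sum ≤ (L.map w).sum :=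
      List.Sublist.sum_le_sum hsub' (by
        intro y hy
        obtain ⟨t, -, rfl⟩ := List.mem_map.1 hy
        exact mrmW_nonneg dhat enc t)
    have hmemL' : ∀ s ∈ L', s ≠ 1 := by
      intro s hs
      have := List.of_mem_filter hs
      simpa using this
    have hεL' : ∀ s ∈ L', ε ≤ w s := fun s hs => hεle s (hmemL' s hs)
    have hsumρ : (L'.map w).sum < ρ := lt_of_le_of_lt hsum' ha
    refine ⟨L', ?_, ?_, hprod'⟩
    · -- length bound
      have h1 : ε * L'.length ≤ (L'.map w).sum := sum_ge_mul_length L' hεL'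
      have h2 : (L'.length : ℝ) ≤ ρ / ε := by
        rw [le_div_iff₀ hεpos]
        nlinarith
      have h3 : (L'.length : ℝ) ≤ (N : ℝ) := h2.trans (Nat.le_ceil _)
      exact_mod_cast h3
    · -- membership in W
      intro s hs
      simp only [Set.mem_setOf_eq]
      have : w s ≤ (L'.map w).sum :=
        List.single_le_sum (by
          intro y hy
          obtain ⟨t, -, rfl⟩ := List.mem_map.1 hy
          exact mrmW_nonneg dhat enc t) _ (List.mem_map_of_mem hs)
      linarith
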